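/- For every ζ ∈ (0, 1/6): sin(πζ) + (2·cos(π(ζ + 1/3)) - 1)/(4πζ) + (√3/2)·cos(π(ζ + 1/3)) > 0. -/

import Mathlib

open Real

private lemma f_pos {t : ℝ} (ht : t ∈ Set.Ioo (0 : ℝ) (Real.pi / 6)) :
    0 < 2 * t * Real.sin (t + Real.pi / 3) + 2 * Real.cos (t + Real.pi / 3) - 1 := by
  set f : ℝ → ℝ := fun t => 2 * t * Real.sin (t + Real.pi / 3) + 2 * Real.cos (t + Real.pi / 3) - 1 with hf
  have hderiv : ∀ x : ℝ, HasDerivAt f (2 * x * Real.cos (x + Real.pi / 3)) x := by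
    intro x
    have h1 : HasDerivAt (fun x : ℝ => x + Real.pi / 3) 1 x :=
      (hasDerivAt_id x).add_const _
    have hsin : HasDerivAt (fun x : ℝ => Real.sin (x + Real.pi / 3))
        (Real.cos (x + Real.pi / 3) * 1) x := (Real.hasDerivAt_sin _).comp x h1
    have hcos : HasDerivAt (fun x : ℝ => Real.cos (x + Real.pi / 3))
        (-Real.sin (x + Real.pi / 3) * 1) x := (Real.hasDerivAt_cos _).comp x h1
    have h2 : HasDerivAt (fun x : ℝ => 2 * x) 2 x := by
      simpa using (hasDerivAt_id x).const_mul 2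
    have : HasDerivAt (fun y : ℝ => 2 * y * Real.sin (y + Real.pi / 3) + 2 * Real.cos (y + Real.pi / 3) - 1)
        (2 * Real.sin (x + Real.pi / 3) + 2 * x * (Real.cos (x + Real.pi / 3) * 1) +
          2 * (-Real.sin (x + Real.pi / 3) * 1)) x :=
      ((h2.mul hsin).add (hcos.const_mul 2)).sub_const 1
    convert this using 1
    ring
  have hmono : StrictMonoOn f (Set.Icc 0 (Real.pi / 6)) := by
    apply strictMonoOn_of_deriv_pos (convex_Icc _ _)
    · exact fun x _ => (hderiv x).continuousAt.continuousWithinAt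
    · intro x hx
      rw [interior_Icc] at hx
      rw [(hderiv x).deriv]
      have hcospos : 0 < Real.cos (x + Real.pi / 3) := by
        apply Real.cos_pos_of_mem_Ioo
        constructor
        · nlinarith [Real.pi_pos, hx.1]
        · nlinarith [Real.pi_pos, hx.2]
      have : 0 < 2 * x := by linarith [hx.1]
      exact mul_pos this hcospos
  have h0 : f 0 = 0 := by
    simp [hf, Real.cos_pi_div_three]
  have := hmono (Set.mem_Icc.mpr ⟨le_refl 0, by positivity⟩)
      (Set.mem_Icc.mpr ⟨ht.1.le, ht.2.le⟩) ht.1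
  rw [h0] at this
  exact this

/-- For every `ζ ∈ (0, 1/6)`:
`sin(πζ) + (2·cos(π(ζ+1/3)) - 1)/(4πζ) + (√3/2)·cos(π(ζ+1/3)) > 0`. -/
theorem Phi_positive
    (ζ : ℝ) (hζ : ζ ∈ Set.Ioo (0 : ℝ) (1/6)) :
    Real.sin (Real.pi * ζ) +
      (2 * Real.cos (Real.pi * (ζ + 1/3)) - 1) / (4 * Real.pi * ζ) +
      (Real.sqrt 3 / 2) * Real.cos (Real.pi * (ζ + 1/3)) > 0 := by
  obtain ⟨hζ0, hζ1⟩ := hζ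
  have hπ := Real.pi_pos
  have hA : Real.pi * (ζ + 1/3) = Real.pi * ζ + Real.pi / 3 := by ring
  have hsub : Real.pi * ζ = (Real.pi * ζ + Real.pi / 3) - Real.pi / 3 := by ring
  have hsin : Real.sin (Real.pi * ζ) =
      Real.sin (Real.pi * ζ + Real.pi / 3) * (1/2) -
      Real.cos (Real.pi * ζ + Real.pi / 3) * (Real.sqrt 3 / 2) := by
    conv_lhs => rw [hsub]
    rw [Real.sin_sub, Real.cos_pi_div_three, Real.sin_pi_div_three]
  rw [hA, hsin]
  set B := Real.pi * ζ + Real.pi / 3 with hB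
  have ht : Real.pi * ζ ∈ Set.Ioo (0 : ℝ) (Real.pi / 6) := by
    constructor
    · positivity
    · nlinarith
  have hf := f_pos ht
  have hden : 0 < 4 * Real.pi * ζ := by positivity
  have key : Real.sin B * (1/2) - Real.cos B * (Real.sqrt 3 / 2) +
      (2 * Real.cos B - 1) / (4 * Real.pi * ζ) + (Real.sqrt 3 / 2) * Real.cos B =
      (2 * (Real.pi * ζ) * Real.sin B + 2 * Real.cos B - 1) / (4 * Real.pi * ζ) := by
    field_simp
    ring
  rw [key]
  exact div_pos hf hden
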